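/- Let Z ∈ H_2^- (F_0-measurable, E(Z|F_{-∞})=0, Σ_{k≥0}||P_{-k}Z||_2 < ∞) and define QZ = E(Z∘θ|F_0) and the operator D W := Σ_{n∈Z} P_1(W∘θ^n). Then D((I−Q)Z) = (P_0 Z)∘θ and the coboundary identity (I−Q)Z − D((I−Q)Z) = Z − Z∘θ holds. -/

import Mathlib

open MeasureTheory Filter Real

noncomputable def l2norm {Ω X : Type} (m : MeasurableSpace Ω) [NormedAddCommGroup X]
    (μ : @Measure Ω m) (f : Ω → X) : ℝ :=
  Real.sqrt (∫ ω, ‖f ω‖ ^ 2 ∂μ)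

/-- The martingale difference projection `P_n = E(·|F_n) − E(·|F_{n-1})`. -/
noncomputable def Pproj {Ω X : Type} (m : MeasurableSpace Ω) [NormedAddCommGroup X]
    [NormedSpace ℝ X] [CompleteSpace X] (μ : @Measure Ω m)
    (F : ℤ → MeasurableSpace Ω) (n : ℤ) (f : Ω → X) : Ω → X :=
  fun ω => (μ[f | F n]) ω - (μ[f | F (n - 1)]) ω

/-- The operator `Q W = E(W∘θ | F₀)`. -/
noncomputable def QOp {Ω X : Type} (m : MeasurableSpace Ω) [NormedAddCommGroup X]
    [NormedSpace ℝ X] [CompleteSpace X] (μ : @Measure Ω m) (θ : Ω → Ω)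
    (F0 : MeasurableSpace Ω) (W : Ω → X) : Ω → X :=
  μ[W ∘ θ | F0]

section Aux

variable {Ω X : Type} [NormedAddCommGroup X] [NormedSpace ℝ X] [CompleteSpace X]
  {𝒢 m : MeasurableSpace Ω} {μ : Measure Ω} [IsProbabilityMeasure μ]

lemma condexp_comp_mp (T : Ω → Ω) (hT : MeasurePreserving T μ μ)
    (h𝒢 : 𝒢 ≤ m) {f : Ω → X} (hf : Integrable f μ) :
    μ[f ∘ T | MeasurableSpace.comap T 𝒢] =ᵐ[μ] (μ[f | 𝒢]) ∘ T := by
  have hcle : MeasurableSpace.comap T 𝒢 ≤ m := by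
    rintro s ⟨t, ht, rfl⟩
    exact hT.measurable (h𝒢 t ht)
  have hcesm : AEStronglyMeasurable (μ[f | 𝒢]) μ :=
    (stronglyMeasurable_condExp.mono h𝒢).aestronglyMeasurable
  have hint : Integrable ((μ[f | 𝒢]) ∘ T) μ :=
    (hT.integrable_comp hcesm).mpr integrable_condExp
  have key : ∀ (h : Ω → X), AEStronglyMeasurable h μ → ∀ t : Set Ω, MeasurableSet[𝒢] t →
      ∫ x in T ⁻¹' t, h (T x) ∂μ = ∫ y in t, h y ∂μ := by
    intro h hh t ht
    have h1 : ∫ y in t, h y ∂(Measure.map T μ) = ∫ x in T ⁻¹' t, h (T x) ∂μ :=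
      setIntegral_map (h𝒢 t ht) (by rwa [hT.map_eq]) hT.measurable.aemeasurable
    rw [hT.map_eq] at h1
    exact h1.symm
  refine (ae_eq_condExp_of_forall_setIntegral_eq hcle
    ((hT.integrable_comp hf.aestronglyMeasurable).mpr hf)
    (fun s _ _ => hint.integrableOn) ?_ ?_).symm
  · rintro s ⟨t, ht, rfl⟩ _
    calc ∫ x in T ⁻¹' t, ((μ[f | 𝒢]) ∘ T) x ∂μ = ∫ y in t, (μ[f | 𝒢]) y ∂μ :=
          key _ hcesm t ht
      _ = ∫ y in t, f y ∂μ := setIntegral_condExp h𝒢 hf ht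
      _ = ∫ x in T ⁻¹' t, (f ∘ T) x ∂μ := (key f hf.aestronglyMeasurable t ht).symm
  · exact StronglyMeasurable.aestronglyMeasurable
      (stronglyMeasurable_condExp.comp_measurable (Measurable.of_comap_le le_rfl))

lemma condexp_clm_comm (h𝒢 : 𝒢 ≤ m) (φ : X →L[ℝ] ℝ)
    {f : Ω → X} (hf : Integrable f μ) :
    μ[(fun ω => φ (f ω)) | 𝒢] =ᵐ[μ] fun ω => φ ((μ[f | 𝒢]) ω) := by
  refine (ae_eq_condExp_of_forall_setIntegral_eq h𝒢 (φ.integrable_comp hf)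
    (fun s _ _ => (φ.integrable_comp integrable_condExp).integrableOn) ?_ ?_).symm
  · intro s hs _
    have h1 : ∫ x in s, φ ((μ[f | 𝒢]) x) ∂μ = φ (∫ x in s, (μ[f | 𝒢]) x ∂μ) :=
      φ.integral_comp_comm integrable_condExp.integrableOn
    have h2 : ∫ x in s, φ (f x) ∂μ = φ (∫ x in s, f x ∂μ) :=
      φ.integral_comp_comm hf.integrableOn
    rw [h1, h2, setIntegral_condExp h𝒢 hf hs]
  · exact StronglyMeasurable.aestronglyMeasurable
      (φ.continuous.comp_stronglyMeasurable stronglyMeasurable_condExp)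

lemma norm_condexp_le_condexp_norm [TopologicalSpace.SeparableSpace X]
    (h𝒢 : 𝒢 ≤ m) {f : Ω → X} (hf : Integrable f μ) :
    ∀ᵐ ω ∂μ, ‖(μ[f | 𝒢]) ω‖ ≤ (μ[(fun ω' => ‖f ω'‖) | 𝒢]) ω := by
  haveI : Nonempty X := ⟨0⟩
  set x : ℕ → X := TopologicalSpace.denseSeq X with hxdef
  have hx : DenseRange x := TopologicalSpace.denseRange_denseSeq X
  choose φ hφ1 hφ2 using fun k : ℕ => exists_dual_vector'' ℝ (x k)
  have hk : ∀ k : ℕ, ∀ᵐ ω ∂μ, φ k ((μ[f | 𝒢]) ω) ≤ (μ[(fun ω' => ‖f ω'‖) | 𝒢]) ω := by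
    intro k
    have h1 : μ[(fun ω => φ k (f ω)) | 𝒢] =ᵐ[μ] fun ω => φ k ((μ[f | 𝒢]) ω) :=
      condexp_clm_comm h𝒢 (φ k) hf
    have h2 : μ[(fun ω => φ k (f ω)) | 𝒢] ≤ᵐ[μ] μ[(fun ω' => ‖f ω'‖) | 𝒢] := by
      refine condExp_mono ((φ k).integrable_comp hf) hf.norm
        (Eventually.of_forall fun ω => ?_)
      have h3 : |φ k (f ω)| ≤ ‖φ k‖ * ‖f ω‖ := (φ k).le_opNorm (f ω)
      have h4 : ‖φ k‖ * ‖f ω‖ ≤ 1 * ‖f ω‖ :=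
        mul_le_mul_of_nonneg_right (hφ1 k) (norm_nonneg _)
      calc φ k (f ω) ≤ |φ k (f ω)| := le_abs_self _
        _ ≤ ‖f ω‖ := by linarith
    filter_upwards [h1, h2] with ω e1 e2
    rw [← e1]; exact e2
  filter_upwards [ae_all_iff.mpr hk] with ω hω
  refine le_of_forall_pos_le_add fun ε hε => ?_
  obtain ⟨k, hk'⟩ := hx.exists_dist_lt ((μ[f | 𝒢]) ω) (show (0:ℝ) < ε/2 by linarith)
  have hd : ‖(μ[f | 𝒢]) ω - x k‖ < ε/2 := by rwa [← dist_eq_norm]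
  have hd' : ‖x k - (μ[f | 𝒢]) ω‖ < ε/2 := by rwa [norm_sub_rev]
  have e1 : ‖(μ[f | 𝒢]) ω‖ ≤ ‖x k‖ + ε/2 := by
    have := norm_sub_norm_le ((μ[f | 𝒢]) ω) (x k)
    linarith
  have e2 : φ k (x k) - φ k ((μ[f | 𝒢]) ω) ≤ ε/2 := by
    have h5 : φ k (x k) - φ k ((μ[f | 𝒢]) ω) = φ k (x k - (μ[f | 𝒢]) ω) := by
      rw [map_sub]
    have h6 : |φ k (x k - (μ[f | 𝒢]) ω)| ≤ ‖φ k‖ * ‖x k - (μ[f | 𝒢]) ω‖ :=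
      (φ k).le_opNorm _
    have h7 : ‖φ k‖ * ‖x k - (μ[f | 𝒢]) ω‖ ≤ 1 * ‖x k - (μ[f | 𝒢]) ω‖ :=
      mul_le_mul_of_nonneg_right (hφ1 k) (norm_nonneg _)
    have := le_abs_self (φ k (x k - (μ[f | 𝒢]) ω))
    rw [h5]
    linarith
  have e3 : φ k (x k) = ‖x k‖ := by simpa using hφ2 k
  have e4 := hω k
  linarith

lemma memℒp_two_condexp_real (h𝒢 : 𝒢 ≤ m)
    {h : Ω → ℝ} (hh : MemLp h 2 μ) : MemLp (μ[h | 𝒢]) 2 μ := by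
  set g : Lp ℝ 2 μ := (condExpL2 ℝ ℝ h𝒢 (hh.toLp h) : Lp ℝ 2 μ) with hg
  have hmem : MemLp (g : Ω → ℝ) 2 μ := Lp.memLp g
  have heq : (g : Ω → ℝ) =ᵐ[μ] μ[h | 𝒢] := by
    refine ae_eq_condExp_of_forall_setIntegral_eq h𝒢 (hh.integrable one_le_two)
      (fun s _ _ => (hmem.integrable one_le_two).integrableOn) ?_ ?_
    · intro s hs hμs
      rw [hg]
      rw [integral_condExpL2_eq h𝒢 (hh.toLp h) hs hμs.ne]
      exact integral_congr_ae (ae_restrict_of_ae (hh.coeFn_toLp))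
    · exact lpMeas.aestronglyMeasurable _
  exact hmem.ae_eq heq

lemma memℒp_two_condexp [TopologicalSpace.SeparableSpace X]
    (h𝒢 : 𝒢 ≤ m)
    {f : Ω → X} (hf : MemLp f 2 μ) : MemLp (μ[f | 𝒢]) 2 μ := by
  refine (memℒp_two_condexp_real h𝒢 hf.norm).of_le
    (stronglyMeasurable_condExp.mono h𝒢).aestronglyMeasurable ?_
  filter_upwards [norm_condexp_le_condexp_norm h𝒢 (hf.integrable one_le_two)] with ω hω
  exact hω.trans (le_abs_self _)

end Aux

/-- for `Z ∈ H₂⁻`, the operator `D W = ∑_{n∈ℤ} P₁(W∘θⁿ)` applied to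
`(I−Q)Z` equals `(P₀Z)∘θ` (the series converging in `L²`), and the Gordin–Lifšic
coboundary identity `(I−Q)Z − D((I−Q)Z) = Z − Z∘θ` holds. -/
theorem stmt12
    (X : Type) [NormedAddCommGroup X] [NormedSpace ℝ X] [CompleteSpace X]
    [TopologicalSpace.SeparableSpace X]
    (Ω : Type) [m : MeasurableSpace Ω] (μ : Measure Ω) [IsProbabilityMeasure μ]
    (θ : Ω → Ω) (hθ : MeasurePreserving θ μ μ)
    (ι : ℤ → Ω → Ω) (hι1 : ι 1 = θ) (hι0 : ι 0 = id)
    (hιadd : ∀ a b : ℤ, ι (a + b) = ι a ∘ ι b)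
    (hιmp : ∀ n : ℤ, MeasurePreserving (ι n) μ μ)
    (F : ℤ → MeasurableSpace Ω) (hmono : Monotone F) (hle : ∀ n, F n ≤ m)
    (hFθ : ∀ n : ℤ, F (n + 1) = MeasurableSpace.comap θ (F n))
    (Z : Ω → X) (hZ : MemLp Z 2 μ) (hZmeas : StronglyMeasurable[F 0] Z)
    (hZreg : μ[Z | ⨅ n : ℤ, F n] =ᵐ[μ] 0)
    (hZH : Summable (fun k : ℕ => l2norm m μ (Pproj m μ F (-(k : ℤ)) Z))) :
    Tendsto (fun N : ℕ =>
        eLpNorm (fun ω =>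
          (∑ n ∈ Finset.Icc (-(N : ℤ)) (N : ℤ),
            ((μ[(fun ω' => Z ω' - QOp m μ θ (F 0) Z ω') ∘ ι n | F 1]) ω -
             (μ[(fun ω' => Z ω' - QOp m μ θ (F 0) Z ω') ∘ ι n | F 0]) ω)) -
          Pproj m μ F 0 Z (θ ω)) 2 μ)
      atTop (nhds 0) ∧
    (fun ω => (Z ω - QOp m μ θ (F 0) Z ω) - Pproj m μ F 0 Z (θ ω)) =ᵐ[μ]
      (fun ω => Z ω - Z (θ ω)) := by
  set W : Ω → X := fun ω' => Z ω' - QOp m μ θ (F 0) Z ω' with hWdef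
  -- basic integrability
  have hZint : Integrable Z μ := hZ.integrable one_le_two
  have hQint : Integrable (μ[Z ∘ θ | F 0]) μ := integrable_condExp
  have hQsm : AEStronglyMeasurable (μ[Z ∘ θ | F 0]) μ :=
    (stronglyMeasurable_condExp.mono (hle 0)).aestronglyMeasurable
  have hZι : ∀ n : ℤ, Integrable (Z ∘ ι n) μ := fun n =>
    ((hιmp n).integrable_comp hZ.aestronglyMeasurable).mpr hZint
  have hQι : ∀ n : ℤ, Integrable ((μ[Z ∘ θ | F 0]) ∘ ι n) μ := fun n =>
    ((hιmp n).integrable_comp hQsm).mpr hQint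
  -- comap shift lemma
  have hnat : ∀ (j : ℕ) (k : ℤ), F (k + j) = MeasurableSpace.comap (ι j) (F k) := by
    intro j
    induction j with
    | zero => intro k; simp [hι0, MeasurableSpace.comap_id]
    | succ j ih =>
      intro k
      have h1 : ((j + 1 : ℕ) : ℤ) = 1 + (j : ℤ) := by push_cast; ring
      have h2 : ι ((j + 1 : ℕ) : ℤ) = θ ∘ ι (j : ℤ) := by rw [h1, hιadd, hι1]
      have h3 : (k + ((j + 1 : ℕ) : ℤ)) = (k + 1) + (j : ℤ) := by push_cast; ring
      rw [h3, ih (k + 1), hFθ, MeasurableSpace.comap_comp, ← h2]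
  have hcomap : ∀ (n k : ℤ), F (k + n) = MeasurableSpace.comap (ι n) (F k) := by
    intro n k
    rcases le_or_gt 0 n with hn | hn
    · obtain ⟨j, rfl⟩ := Int.eq_ofNat_of_zero_le hn
      exact hnat j k
    · have hpos : (0 : ℤ) ≤ -n := by linarith
      obtain ⟨j, hj⟩ := Int.eq_ofNat_of_zero_le hpos
      have h1 : F k = MeasurableSpace.comap (ι (-n)) (F (k + n)) := by
        have h := hnat j (k + n)
        rw [← hj] at h
        rw [← h]
        congr 1
        ring
      have h2 : ι (-n) ∘ ι n = id := by
        rw [← hιadd, show (-n + n : ℤ) = 0 by ring, hι0]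
      rw [h1, MeasurableSpace.comap_comp, h2, MeasurableSpace.comap_id]
  have hcond : ∀ (V : Ω → X), Integrable V μ → ∀ (n k : ℤ),
      μ[(V ∘ ι n) | F k] =ᵐ[μ] (μ[V | F (k - n)]) ∘ ι n := by
    intro V hV n k
    have h1 : F k = MeasurableSpace.comap (ι n) (F (k - n)) := by
      have := hcomap n (k - n)
      rwa [sub_add_cancel] at this
    rw [h1]
    exact condexp_comp_mp (ι n) (hιmp n) (hle _) hV
  -- fixed points of condexp
  have hZfix : ∀ j : ℤ, 0 ≤ j → μ[Z | F j] = Z := fun j hj =>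
    condExp_of_stronglyMeasurable (hle j) (hZmeas.mono (hmono hj)) hZint
  have hQfix : ∀ j : ℤ, 0 ≤ j → μ[(μ[Z ∘ θ | F 0]) | F j] = μ[Z ∘ θ | F 0] := fun j hj =>
    condExp_of_stronglyMeasurable (hle j) (stronglyMeasurable_condExp.mono (hmono hj)) hQint
  -- compose ae-equalities with ι n
  have hcomp : ∀ (n : ℤ) (u v : Ω → X), u =ᵐ[μ] v → u ∘ ι n =ᵐ[μ] v ∘ ι n := fun n u v h =>
    ae_eq_comp (hιmp n).measurable.aemeasurable (by rwa [(hιmp n).map_eq])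
  -- reduction for the Q-part
  have hQred : ∀ j : ℤ, j ≤ 0 → μ[(μ[Z ∘ θ | F 0]) | F j] =ᵐ[μ] (μ[Z | F (j - 1)]) ∘ θ := by
    intro j hj
    have h1 : μ[(μ[Z ∘ θ | F 0]) | F j] =ᵐ[μ] μ[Z ∘ θ | F j] :=
      condExp_condExp_of_le (hmono hj) (hle 0)
    have h2 := hcond Z hZint 1 j
    rw [hι1] at h2
    exact h1.trans h2
  -- splitting of W
  have hsplit : ∀ (n k : ℤ), μ[W ∘ ι n | F k] =ᵐ[μ]
      fun ω => (μ[Z ∘ ι n | F k]) ω - (μ[(μ[Z ∘ θ | F 0]) ∘ ι n | F k]) ω := by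
    intro n k
    have he : W ∘ ι n = (Z ∘ ι n) - ((μ[Z ∘ θ | F 0]) ∘ ι n) := rfl
    rw [he]
    exact condExp_sub (hZι n) (hQι n) (F k)
  -- the telescoping auxiliary sequence
  set G : ℤ → Ω → X := fun n ω => (μ[Z | F (1 - n)]) (ι n ω) - (μ[Z | F (-n)]) (ι n ω) with hG
  -- term computation for n ≤ 0
  have hterm0 : ∀ n : ℤ, n ≤ 0 →
      (fun ω => (μ[W ∘ ι n | F 1]) ω - (μ[W ∘ ι n | F 0]) ω) =ᵐ[μ] (fun _ => (0 : X)) := by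
    intro n hn
    have k1Z : μ[Z ∘ ι n | F 1] =ᵐ[μ] Z ∘ ι n := by
      have h := hcond Z hZint n 1
      rwa [hZfix (1 - n) (by linarith)] at h
    have k0Z : μ[Z ∘ ι n | F 0] =ᵐ[μ] Z ∘ ι n := by
      have h := hcond Z hZint n 0
      rwa [hZfix (0 - n) (by linarith)] at h
    have k1Q : μ[(μ[Z ∘ θ | F 0]) ∘ ι n | F 1] =ᵐ[μ] (μ[Z ∘ θ | F 0]) ∘ ι n := by
      have h := hcond _ hQint n 1
      rwa [hQfix (1 - n) (by linarith)] at h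
    have k0Q : μ[(μ[Z ∘ θ | F 0]) ∘ ι n | F 0] =ᵐ[μ] (μ[Z ∘ θ | F 0]) ∘ ι n := by
      have h := hcond _ hQint n 0
      rwa [hQfix (0 - n) (by linarith)] at h
    filter_upwards [hsplit n 1, hsplit n 0, k1Z, k0Z, k1Q, k0Q] with ω e1 e2 e3 e4 e5 e6
    simp only [Function.comp_apply] at *
    rw [e1, e2, e3, e4, e5, e6]
    abel
  -- term computation for 1 ≤ n
  have hterm1 : ∀ n : ℤ, 1 ≤ n →
      (fun ω => (μ[W ∘ ι n | F 1]) ω - (μ[W ∘ ι n | F 0]) ω) =ᵐ[μ]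
        (fun ω => G n ω - G (n + 1) ω) := by
    intro n hn
    have k1Z : μ[Z ∘ ι n | F 1] =ᵐ[μ] (μ[Z | F (1 - n)]) ∘ ι n := hcond Z hZint n 1
    have k0Z : μ[Z ∘ ι n | F 0] =ᵐ[μ] (μ[Z | F (-n)]) ∘ ι n := by
      have h := hcond Z hZint n 0
      rwa [show (0 - n : ℤ) = -n by ring] at h
    have hcompθ : ∀ (u : Ω → X), (u ∘ θ) ∘ ι n = u ∘ ι (n + 1) := by
      intro u
      rw [show (u ∘ θ) ∘ ι n = u ∘ (θ ∘ ι n) from rfl, ← hι1, ← hιadd,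
        show (1 + n : ℤ) = n + 1 by ring]
    have k1Q : μ[(μ[Z ∘ θ | F 0]) ∘ ι n | F 1] =ᵐ[μ] (μ[Z | F (-n)]) ∘ ι (n + 1) := by
      have c1 := hcond _ hQint n 1
      have c2 : (μ[(μ[Z ∘ θ | F 0]) | F (1 - n)]) ∘ ι n =ᵐ[μ]
          ((μ[Z | F (-n)]) ∘ θ) ∘ ι n := by
        refine hcomp n _ _ ?_
        have h := hQred (1 - n) (by linarith)
        rwa [show (1 - n - 1 : ℤ) = -n by ring] at h
      rw [hcompθ] at c2
      exact c1.trans c2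
    have k0Q : μ[(μ[Z ∘ θ | F 0]) ∘ ι n | F 0] =ᵐ[μ] (μ[Z | F (-n - 1)]) ∘ ι (n + 1) := by
      have c1 := hcond _ hQint n 0
      rw [show (0 - n : ℤ) = -n by ring] at c1
      have c2 : (μ[(μ[Z ∘ θ | F 0]) | F (-n)]) ∘ ι n =ᵐ[μ]
          ((μ[Z | F (-n - 1)]) ∘ θ) ∘ ι n := by
        refine hcomp n _ _ ?_
        exact hQred (-n) (by linarith)
      rw [hcompθ] at c2
      exact c1.trans c2
    filter_upwards [hsplit n 1, hsplit n 0, k1Z, k0Z, k1Q, k0Q] with ω e1 e2 e3 e4 e5 e6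
    simp only [Function.comp_apply] at *
    have hGn : G n ω = (μ[Z | F (1 - n)]) (ι n ω) - (μ[Z | F (-n)]) (ι n ω) := rfl
    have hGn1' : G (n + 1) ω = (μ[Z | F (1 - (n + 1))]) (ι (n + 1) ω) -
        (μ[Z | F (-(n + 1))]) (ι (n + 1) ω) := rfl
    rw [show (1 - (n + 1) : ℤ) = -n by ring, show (-(n + 1) : ℤ) = -n - 1 by ring] at hGn1'
    have hGn1 : G (n + 1) ω = (μ[Z | F (-n)]) (ι (n + 1) ω) -
        (μ[Z | F (-n - 1)]) (ι (n + 1) ω) := hGn1'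
    rw [e1, e2, e3, e4, e5, e6, hGn, hGn1]
    abel
  -- telescoping
  have htel : ∀ N : ℕ,
      (fun ω => ∑ n ∈ Finset.Icc (-(N : ℤ)) (N : ℤ),
        ((μ[W ∘ ι n | F 1]) ω - (μ[W ∘ ι n | F 0]) ω)) =ᵐ[μ]
      (fun ω => G 1 ω - G ((N : ℤ) + 1) ω) := by
    intro N
    induction N with
    | zero =>
      filter_upwards [hterm0 0 le_rfl] with ω e
      simp only [Nat.cast_zero, neg_zero, Finset.Icc_self, Finset.sum_singleton]
      rw [e]
      simp [zero_add, sub_self]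
    | succ N ih =>
      have hc : ((N + 1 : ℕ) : ℤ) = (N : ℤ) + 1 := by push_cast; ring
      have hset : Finset.Icc (-((N + 1 : ℕ) : ℤ)) ((N + 1 : ℕ) : ℤ) =
          insert (-((N + 1 : ℕ) : ℤ)) (insert ((N + 1 : ℕ) : ℤ)
            (Finset.Icc (-(N : ℤ)) (N : ℤ))) := by
        ext a
        simp only [Finset.mem_Icc, Finset.mem_insert]
        push_cast
        omega
      have hmem1 : (-((N + 1 : ℕ) : ℤ)) ∉ insert ((N + 1 : ℕ) : ℤ)
          (Finset.Icc (-(N : ℤ)) (N : ℤ)) := by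
        simp only [Finset.mem_insert, Finset.mem_Icc]
        push_cast
        omega
      have hmem2 : ((N + 1 : ℕ) : ℤ) ∉ Finset.Icc (-(N : ℤ)) (N : ℤ) := by
        simp only [Finset.mem_Icc]
        push_cast
        omega
      have ht1 := hterm0 (-((N + 1 : ℕ) : ℤ)) (by push_cast; omega)
      have ht2 := hterm1 ((N + 1 : ℕ) : ℤ) (by push_cast; omega)
      filter_upwards [ih, ht1, ht2] with ω e0 e1 e2
      rw [hset, Finset.sum_insert hmem1, Finset.sum_insert hmem2, e0, e1, e2, hc]
      abel
  -- identification of G 1 and G (N+1)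
  have hG1 : ∀ ω, G 1 ω = Pproj m μ F 0 Z (θ ω) := by
    intro ω
    calc G 1 ω = (μ[Z | F (1 - 1)]) (ι 1 ω) - (μ[Z | F (-1)]) (ι 1 ω) := rfl
      _ = (μ[Z | F 0]) (θ ω) - (μ[Z | F (0 - 1)]) (θ ω) := by
          rw [hι1, show (1 - 1 : ℤ) = 0 by ring, show (-1 : ℤ) = 0 - 1 by ring]
      _ = Pproj m μ F 0 Z (θ ω) := rfl
  have hGP : ∀ (N : ℕ) (ω : Ω), G ((N : ℤ) + 1) ω =
      Pproj m μ F (-(N : ℤ)) Z (ι ((N : ℤ) + 1) ω) := by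
    intro N ω
    calc G ((N : ℤ) + 1) ω = (μ[Z | F (1 - ((N : ℤ) + 1))]) (ι ((N : ℤ) + 1) ω) -
          (μ[Z | F (-((N : ℤ) + 1))]) (ι ((N : ℤ) + 1) ω) := rfl
      _ = (μ[Z | F (-(N : ℤ))]) (ι ((N : ℤ) + 1) ω) -
          (μ[Z | F (-(N : ℤ) - 1)]) (ι ((N : ℤ) + 1) ω) := by
          rw [show (1 - ((N : ℤ) + 1) : ℤ) = -(N : ℤ) by ring,
            show (-((N : ℤ) + 1) : ℤ) = -(N : ℤ) - 1 by ring]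
      _ = Pproj m μ F (-(N : ℤ)) Z (ι ((N : ℤ) + 1) ω) := rfl
  -- L² facts about Pproj
  have hPmem : ∀ j : ℤ, MemLp (Pproj m μ F j Z) 2 μ := fun j =>
    (memℒp_two_condexp (hle j) hZ).sub (memℒp_two_condexp (hle (j - 1)) hZ)
  have hPsm : ∀ j : ℤ, AEStronglyMeasurable (Pproj m μ F j Z) μ := fun j =>
    ((stronglyMeasurable_condExp.mono (hle j)).sub
      (stronglyMeasurable_condExp.mono (hle (j - 1)))).aestronglyMeasurable
  have hofReal : ∀ j : ℤ, eLpNorm (Pproj m μ F j Z) 2 μ =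
      ENNReal.ofReal (l2norm m μ (Pproj m μ F j Z)) := by
    intro j
    rw [(hPmem j).eLpNorm_eq_integral_rpow_norm (by norm_num) (by norm_num)]
    congr 1
    rw [l2norm, Real.sqrt_eq_rpow]
    norm_num
  -- per-N chain of equalities
  have hchain : ∀ N : ℕ,
      eLpNorm (fun ω =>
        (∑ n ∈ Finset.Icc (-(N : ℤ)) (N : ℤ),
          ((μ[W ∘ ι n | F 1]) ω - (μ[W ∘ ι n | F 0]) ω)) -
        Pproj m μ F 0 Z (θ ω)) 2 μ =
      ENNReal.ofReal (l2norm m μ (Pproj m μ F (-(N : ℤ)) Z)) := by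
    intro N
    have hae : (fun ω =>
        (∑ n ∈ Finset.Icc (-(N : ℤ)) (N : ℤ),
          ((μ[W ∘ ι n | F 1]) ω - (μ[W ∘ ι n | F 0]) ω)) -
        Pproj m μ F 0 Z (θ ω)) =ᵐ[μ]
        (fun ω => -((Pproj m μ F (-(N : ℤ)) Z ∘ ι ((N : ℤ) + 1)) ω)) := by
      filter_upwards [htel N] with ω e
      rw [e, ← hG1 ω]
      simp only [Function.comp_apply, ← hGP N ω]
      abel
    rw [eLpNorm_congr_ae hae]
    have hneg : eLpNorm (fun ω => -((Pproj m μ F (-(N : ℤ)) Z ∘ ι ((N : ℤ) + 1)) ω)) 2 μ =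
        eLpNorm (Pproj m μ F (-(N : ℤ)) Z ∘ ι ((N : ℤ) + 1)) 2 μ :=
      eLpNorm_neg _ _ _
    rw [hneg, eLpNorm_comp_measurePreserving (hPsm _) (hιmp _), hofReal]
  constructor
  · have h0 : Tendsto (fun k : ℕ =>
        ENNReal.ofReal (l2norm m μ (Pproj m μ F (-(k : ℤ)) Z))) atTop (nhds 0) := by
      rw [← ENNReal.ofReal_zero]
      exact (ENNReal.continuous_ofReal.tendsto 0).comp hZH.tendsto_atTop_zero
    exact h0.congr fun N => (hchain N).symm
  · have hQeq : (μ[Z ∘ θ | F 0]) =ᵐ[μ] (μ[Z | F (-1 : ℤ)]) ∘ θ := by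
      have h := hcond Z hZint 1 0
      rw [hι1, show (0 - 1 : ℤ) = -1 by ring] at h
      exact h
    filter_upwards [hQeq] with ω e
    have hP : Pproj m μ F 0 Z (θ ω) = Z (θ ω) - (μ[Z | F (-1 : ℤ)]) (θ ω) := by
      simp only [Pproj]
      rw [show ((0 : ℤ) - 1) = (-1 : ℤ) by ring, hZfix 0 le_rfl]
    have hq : QOp m μ θ (F 0) Z ω = (μ[Z | F (-1 : ℤ)]) (θ ω) := e
    rw [hP, hq]
    abel
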